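/- Fixed point of the uniform limit: if continuous functions z_n : Ω → ℝ converge uniformly to z on the compact rectangle Ω = [0,A] × [0,A], φ : ℝ → ℝ is Lipschitz, and z_{n+1}(s,t) = g(s,t) + Σ_{p=1}^{m} ∫_{a_{p-1}(s)}^{a_p(s)} ∫_{b_{p-1}(t)}^{b_p(t)} k_p(s,t,σ,τ) φ(z_n(σ,τ)) dτ dσ for all n, then z is continuous and satisfies z(s,t) = g(s,t) + Σ_{p=1}^{m} ∫_{a_{p-1}(s)}^{a_p(s)} ∫_{b_{p-1}(t)}^{b_p(t)} k_p(s,t,σ,τ) φ(z(σ,τ)) dτ dσ. -/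

import Mathlib

open Filter intervalIntegral

lemma aux_tietze_ext {X : Type*} [TopologicalSpace X] [NormalSpace X] {s : Set X}
    (hs : IsClosed s) {f : X → ℝ} (hf : ContinuousOn f s) :
    ∃ F : X → ℝ, Continuous F ∧ ∀ x ∈ s, F x = f x := by
  obtain ⟨G, hG⟩ := ContinuousMap.exists_restrict_eq hs ⟨s.restrict f, hf.restrict⟩
  exact ⟨G, G.continuous, fun x hx => ContinuousMap.congr_fun hG ⟨x, hx⟩⟩

theorem fixed_point_of_uniform_limit
    (A : ℝ) (hA : 0 < A) (m : ℕ)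
    (a b : ℕ → ℝ → ℝ)
    (ha_cont : ∀ p, ContinuousOn (a p) (Set.Icc 0 A))
    (hb_cont : ∀ p, ContinuousOn (b p) (Set.Icc 0 A))
    (ha_maps : ∀ p, ∀ s ∈ Set.Icc 0 A, a p s ∈ Set.Icc 0 A)
    (hb_maps : ∀ p, ∀ t ∈ Set.Icc 0 A, b p t ∈ Set.Icc 0 A)
    (ha0 : ∀ s ∈ Set.Icc 0 A, a 0 s = 0)
    (ham : ∀ s ∈ Set.Icc 0 A, a m s = s)
    (ha_mono : ∀ p < m, ∀ s ∈ Set.Icc 0 A, a p s ≤ a (p + 1) s)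
    (hb0 : ∀ t ∈ Set.Icc 0 A, b 0 t = 0)
    (hbm : ∀ t ∈ Set.Icc 0 A, b m t = t)
    (hb_mono : ∀ p < m, ∀ t ∈ Set.Icc 0 A, b p t ≤ b (p + 1) t)
    (k : ℕ → ℝ × ℝ → ℝ × ℝ → ℝ)
    (hk_cont : ∀ p, ContinuousOn (fun q : (ℝ × ℝ) × (ℝ × ℝ) => k p q.1 q.2)
      ((Set.Icc 0 A ×ˢ Set.Icc 0 A) ×ˢ (Set.Icc 0 A ×ˢ Set.Icc 0 A)))
    (K : ℝ) (hk_bdd : ∀ p, ∀ x ∈ Set.Icc 0 A ×ˢ Set.Icc 0 A,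
      ∀ w ∈ Set.Icc 0 A ×ˢ Set.Icc 0 A, |k p x w| ≤ K)
    (g : ℝ × ℝ → ℝ) (hg : ContinuousOn g (Set.Icc 0 A ×ˢ Set.Icc 0 A))
    (φ : ℝ → ℝ) (L : ℝ) (hL : 0 < L)
    (hφ : ∀ x y : ℝ, |φ x - φ y| ≤ L * |x - y|)
    (z : ℕ → ℝ × ℝ → ℝ) (zlim : ℝ × ℝ → ℝ)
    (hz_cont : ∀ n, ContinuousOn (z n) (Set.Icc 0 A ×ˢ Set.Icc 0 A))
    (hz_unif : TendstoUniformlyOn z zlim Filter.atTop (Set.Icc 0 A ×ˢ Set.Icc 0 A))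
    (hz_rec : ∀ n, ∀ s ∈ Set.Icc 0 A, ∀ t ∈ Set.Icc 0 A,
      z (n + 1) (s, t) = g (s, t) + ∑ p ∈ Finset.range m,
        ∫ σ in (a p s)..(a (p + 1) s), ∫ τ in (b p t)..(b (p + 1) t),
          k (p + 1) (s, t) (σ, τ) * φ (z n (σ, τ))) :
    ContinuousOn zlim (Set.Icc 0 A ×ˢ Set.Icc 0 A) ∧
    ∀ s ∈ Set.Icc 0 A, ∀ t ∈ Set.Icc 0 A,
      zlim (s, t) = g (s, t) + ∑ p ∈ Finset.range m,
        ∫ σ in (a p s)..(a (p + 1) s), ∫ τ in (b p t)..(b (p + 1) t),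
          k (p + 1) (s, t) (σ, τ) * φ (zlim (σ, τ)) := by
  have hzlim_cont : ContinuousOn zlim (Set.Icc 0 A ×ˢ Set.Icc 0 A) :=
    hz_unif.continuousOn (Filter.Eventually.of_forall hz_cont).frequently
  refine ⟨hzlim_cont, ?_⟩
  intro s hs t ht
  have hΩc : IsClosed ((Set.Icc (0:ℝ) A) ×ˢ (Set.Icc (0:ℝ) A)) :=
    isClosed_Icc.prod isClosed_Icc
  have hst : ((s, t) : ℝ × ℝ) ∈ (Set.Icc (0:ℝ) A) ×ˢ (Set.Icc (0:ℝ) A) := ⟨hs, ht⟩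
  have h0A : (0:ℝ) ∈ Set.Icc (0:ℝ) A := Set.left_mem_Icc.mpr hA.le
  -- continuity of φ
  have hφc : Continuous φ :=
    (LipschitzWith.of_dist_le_mul (K := L.toNNReal) (fun x y => by
      rw [Real.dist_eq, Real.dist_eq, Real.coe_toNNReal _ hL.le]; exact hφ x y)).continuous
  -- extensions
  choose Z hZc hZe using fun n => aux_tietze_ext hΩc (hz_cont n)
  obtain ⟨W, hWc, hWe⟩ := aux_tietze_ext hΩc hzlim_cont
  choose Kf hKc hKe using fun p => aux_tietze_ext (hΩc.prod hΩc) (hk_cont p)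
  -- interval helpers
  have hIcc : ∀ x y : ℝ, x ∈ Set.Icc (0:ℝ) A → y ∈ Set.Icc (0:ℝ) A →
      Set.uIcc x y ⊆ Set.Icc 0 A := by
    intro x y hx hy u hu
    rcases Set.mem_uIcc.mp hu with h | h <;>
      exact ⟨by linarith [hx.1, hy.1, h.1, h.2], by linarith [hx.2, hy.2, h.1, h.2]⟩
  have hIoc : ∀ x y : ℝ, x ∈ Set.Icc (0:ℝ) A → y ∈ Set.Icc (0:ℝ) A →
      Set.uIoc x y ⊆ Set.Icc 0 A := by
    intro x y hx hy u hu
    rcases Set.mem_uIoc.mp hu with h | h <;>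
      exact ⟨by linarith [hx.1, hy.1, h.1, h.2], by linarith [hx.2, hy.2, h.1, h.2]⟩
  have hlen : ∀ x y : ℝ, x ∈ Set.Icc (0:ℝ) A → y ∈ Set.Icc (0:ℝ) A → |y - x| ≤ A := by
    intro x y hx hy
    rw [abs_sub_le_iff]
    exact ⟨by linarith [hx.1, hy.2], by linarith [hy.1, hx.2]⟩
  -- rewriting integrals with extended functions
  have hswap : ∀ (F G : ℝ × ℝ → ℝ),
      (∀ x ∈ (Set.Icc (0:ℝ) A) ×ˢ (Set.Icc (0:ℝ) A), F x = G x) → ∀ p : ℕ,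
      (∫ σ in (a p s)..(a (p + 1) s), ∫ τ in (b p t)..(b (p + 1) t),
          Kf (p + 1) ((s, t), (σ, τ)) * φ (F (σ, τ))) =
      ∫ σ in (a p s)..(a (p + 1) s), ∫ τ in (b p t)..(b (p + 1) t),
          k (p + 1) (s, t) (σ, τ) * φ (G (σ, τ)) := by
    intro F G hFG p
    apply intervalIntegral.integral_congr
    intro σ hσ
    have hσA := hIcc _ _ (ha_maps p s hs) (ha_maps (p + 1) s hs) hσ
    apply intervalIntegral.integral_congr
    intro τ hτ
    have hτA := hIcc _ _ (hb_maps p t ht) (hb_maps (p + 1) t ht) hτ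
    have hm : ((σ, τ) : ℝ × ℝ) ∈ (Set.Icc (0:ℝ) A) ×ˢ (Set.Icc (0:ℝ) A) := ⟨hσA, hτA⟩
    simp only [hKe (p + 1) ((s, t), (σ, τ)) ⟨hst, hm⟩, hFG _ hm]
  -- clean recursion
  have hrec' : ∀ n, z (n + 1) (s, t) = g (s, t) + ∑ p ∈ Finset.range m,
      ∫ σ in (a p s)..(a (p + 1) s), ∫ τ in (b p t)..(b (p + 1) t),
        Kf (p + 1) ((s, t), (σ, τ)) * φ (Z n (σ, τ)) := by
    intro n
    rw [hz_rec n s hs t ht]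
    congr 1
    exact (Finset.sum_congr rfl fun p _ => hswap (Z n) (z n) (hZe n) p).symm
  -- convergence of each integral term
  have key : ∀ p : ℕ, Tendsto (fun n =>
      ∫ σ in (a p s)..(a (p + 1) s), ∫ τ in (b p t)..(b (p + 1) t),
        Kf (p + 1) ((s, t), (σ, τ)) * φ (Z n (σ, τ))) atTop (nhds
      (∫ σ in (a p s)..(a (p + 1) s), ∫ τ in (b p t)..(b (p + 1) t),
        Kf (p + 1) ((s, t), (σ, τ)) * φ (W (σ, τ)))) := by
    intro p
    rw [Metric.tendsto_atTop]
    intro δ hδ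
    have hK0 : 0 ≤ K := (abs_nonneg _).trans (hk_bdd 0 (0, 0) ⟨h0A, h0A⟩ (0, 0) ⟨h0A, h0A⟩)
    have hd : 0 < K * L * A * A + 1 := by
      have : 0 ≤ K * L * A * A := by positivity
      linarith
    set ε : ℝ := δ / (K * L * A * A + 1) with hεdef
    have hε : 0 < ε := div_pos hδ hd
    obtain ⟨N, hN⟩ := Filter.eventually_atTop.mp
      (Metric.tendstoUniformlyOn_iff.mp hz_unif ε hε)
    refine ⟨N, fun n hn => ?_⟩
    have hC1 : Continuous fun q : ℝ × ℝ => Kf (p + 1) ((s, t), q) * φ (Z n q) :=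
      ((hKc (p + 1)).comp (continuous_const.prodMk continuous_id)).mul (hφc.comp (hZc n))
    have hC2 : Continuous fun q : ℝ × ℝ => Kf (p + 1) ((s, t), q) * φ (W q) :=
      ((hKc (p + 1)).comp (continuous_const.prodMk continuous_id)).mul (hφc.comp hWc)
    have hI1 : Continuous fun σ => ∫ τ in (b p t)..(b (p + 1) t),
        Kf (p + 1) ((s, t), (σ, τ)) * φ (Z n (σ, τ)) :=
      intervalIntegral.continuous_parametric_intervalIntegral_of_continuous'
        (f := fun σ τ => Kf (p + 1) ((s, t), (σ, τ)) * φ (Z n (σ, τ)))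
        (by exact hC1.comp continuous_id) _ _
    have hI2 : Continuous fun σ => ∫ τ in (b p t)..(b (p + 1) t),
        Kf (p + 1) ((s, t), (σ, τ)) * φ (W (σ, τ)) :=
      intervalIntegral.continuous_parametric_intervalIntegral_of_continuous'
        (f := fun σ τ => Kf (p + 1) ((s, t), (σ, τ)) * φ (W (σ, τ)))
        (by exact hC2.comp continuous_id) _ _
    rw [Real.dist_eq, ← intervalIntegral.integral_sub (hI1.intervalIntegrable _ _)
      (hI2.intervalIntegrable _ _)]
    have hBa : |a (p + 1) s - a p s| ≤ A := hlen _ _ (ha_maps p s hs) (ha_maps (p + 1) s hs)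
    have hBb : |b (p + 1) t - b p t| ≤ A := hlen _ _ (hb_maps p t ht) (hb_maps (p + 1) t ht)
    set C : ℝ := K * (L * ε) with hCdef
    have hC0 : 0 ≤ C := mul_nonneg hK0 (mul_nonneg hL.le hε.le)
    have hb1 : ∀ σ ∈ Set.uIoc (a p s) (a (p + 1) s),
        ‖(∫ τ in (b p t)..(b (p + 1) t), Kf (p + 1) ((s, t), (σ, τ)) * φ (Z n (σ, τ))) -
          ∫ τ in (b p t)..(b (p + 1) t), Kf (p + 1) ((s, t), (σ, τ)) * φ (W (σ, τ))‖ ≤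
          C * A := by
      intro σ hσ
      have hσA : σ ∈ Set.Icc (0:ℝ) A :=
        hIoc _ _ (ha_maps p s hs) (ha_maps (p + 1) s hs) hσ
      have hg1 : Continuous fun τ : ℝ => Kf (p + 1) ((s, t), (σ, τ)) * φ (Z n (σ, τ)) := by
        exact hC1.comp (continuous_const.prodMk continuous_id)
      have hg2 : Continuous fun τ : ℝ => Kf (p + 1) ((s, t), (σ, τ)) * φ (W (σ, τ)) := by
        exact hC2.comp (continuous_const.prodMk continuous_id)
      rw [← intervalIntegral.integral_sub (hg1.intervalIntegrable _ _)
        (hg2.intervalIntegrable _ _)]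
      calc ‖∫ τ in (b p t)..(b (p + 1) t),
              (Kf (p + 1) ((s, t), (σ, τ)) * φ (Z n (σ, τ)) -
               Kf (p + 1) ((s, t), (σ, τ)) * φ (W (σ, τ)))‖
          ≤ C * |b (p + 1) t - b p t| := by
            apply intervalIntegral.norm_integral_le_of_norm_le_const
            intro τ hτ
            have hτA : τ ∈ Set.Icc (0:ℝ) A :=
              hIoc _ _ (hb_maps p t ht) (hb_maps (p + 1) t ht) hτ
            have hm : ((σ, τ) : ℝ × ℝ) ∈ (Set.Icc (0:ℝ) A) ×ˢ (Set.Icc (0:ℝ) A) :=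
              ⟨hσA, hτA⟩
            rw [Real.norm_eq_abs, ← mul_sub, abs_mul]
            have hzd : |z n (σ, τ) - zlim (σ, τ)| ≤ ε := by
              have := hN n hn (σ, τ) hm
              rw [Real.dist_eq, abs_sub_comm] at this
              exact this.le
            calc |Kf (p + 1) ((s, t), (σ, τ))| * |φ (Z n (σ, τ)) - φ (W (σ, τ))|
                = |k (p + 1) (s, t) (σ, τ)| * |φ (z n (σ, τ)) - φ (zlim (σ, τ))| := by
                  simp only [hKe (p + 1) ((s, t), (σ, τ)) ⟨hst, hm⟩, hZe n _ hm, hWe _ hm]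
              _ ≤ K * (L * ε) := by
                  apply mul_le_mul (hk_bdd (p + 1) (s, t) hst (σ, τ) hm)
                    ((hφ _ _).trans (mul_le_mul_of_nonneg_left hzd hL.le))
                    (abs_nonneg _) hK0
        _ ≤ C * A := mul_le_mul_of_nonneg_left hBb hC0
    calc |∫ σ in (a p s)..(a (p + 1) s),
            ((∫ τ in (b p t)..(b (p + 1) t), Kf (p + 1) ((s, t), (σ, τ)) * φ (Z n (σ, τ))) -
             ∫ τ in (b p t)..(b (p + 1) t), Kf (p + 1) ((s, t), (σ, τ)) * φ (W (σ, τ)))|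
        ≤ (C * A) * |a (p + 1) s - a p s| :=
          intervalIntegral.norm_integral_le_of_norm_le_const hb1
      _ ≤ (C * A) * A := mul_le_mul_of_nonneg_left hBa (mul_nonneg hC0 hA.le)
      _ < δ := by
          have hde : (K * L * A * A + 1) * ε = δ := by
            rw [hεdef]; field_simp
          rw [hCdef]
          nlinarith [hε, hde]
  -- assemble the limit
  have hR : Tendsto (fun n => g (s, t) + ∑ p ∈ Finset.range m,
      ∫ σ in (a p s)..(a (p + 1) s), ∫ τ in (b p t)..(b (p + 1) t),
        Kf (p + 1) ((s, t), (σ, τ)) * φ (Z n (σ, τ))) atTop (nhds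
      (g (s, t) + ∑ p ∈ Finset.range m,
      ∫ σ in (a p s)..(a (p + 1) s), ∫ τ in (b p t)..(b (p + 1) t),
        Kf (p + 1) ((s, t), (σ, τ)) * φ (W (σ, τ)))) :=
    (tendsto_finset_sum _ fun p _ => key p).const_add _
  have hLz : Tendsto (fun n => z (n + 1) (s, t)) atTop (nhds (zlim (s, t))) :=
    (hz_unif.tendsto_at hst).comp (tendsto_add_atTop_nat 1)
  have hLz' : Tendsto (fun n => g (s, t) + ∑ p ∈ Finset.range m,
      ∫ σ in (a p s)..(a (p + 1) s), ∫ τ in (b p t)..(b (p + 1) t),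
        Kf (p + 1) ((s, t), (σ, τ)) * φ (Z n (σ, τ))) atTop (nhds (zlim (s, t))) := by
    have : (fun n => g (s, t) + ∑ p ∈ Finset.range m,
        ∫ σ in (a p s)..(a (p + 1) s), ∫ τ in (b p t)..(b (p + 1) t),
          Kf (p + 1) ((s, t), (σ, τ)) * φ (Z n (σ, τ))) =
        fun n => z (n + 1) (s, t) := funext fun n => (hrec' n).symm
    rw [this]
    exact hLz
  have hfinal := tendsto_nhds_unique hLz' hR
  rw [hfinal]
  congr 1
  exact Finset.sum_congr rfl fun p _ => hswap W zlim hWe p
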